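/- arXiv:1204.5582 — 5 statements merged into one kernel-verified Lean document; each statement's English description precedes it below -/
import Mathlib

section
/- The set difference function diff(- /a,b) = a \ b is in the class PCSF⁻. -/
open scoped Classical

noncomputable section

namespace PCSFPaper

/-! ## Basic ZF-set helpers -/

/-- Image `{f z : z ∈ x}` of a ZF-set under an arbitrary class function. -/
noncomputable def zImage (f : ZFSet → ZFSet) (x : ZFSet) : ZFSet :=
  @ZFSet.image f (Classical.allZFSetDefinable fun s => f (s 0)) x

/-- Kuratowski ordered pair `⟨c,d⟩ = {{c},{c,d}}`. -/
def kpair (c d : ZFSet) : ZFSet := {{c}, {c, d}}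

/-! ## Δ₀ formulas of the language of set theory -/

/-- Δ₀ (bounded) formulas in the first-order language of set theory,
with `k` free variables.  In the bounded quantifiers `ball i φ`/`bex i φ`
the newly bound variable (ranging over the elements of variable `i`)
becomes variable `0` of `φ`, the old variables being shifted up by one. -/
inductive D0 : ℕ → Type
  | mem {k : ℕ} (i j : Fin k) : D0 k
  | eq {k : ℕ} (i j : Fin k) : D0 k
  | not {k : ℕ} : D0 k → D0 k
  | and {k : ℕ} : D0 k → D0 k → D0 k
  | or {k : ℕ} : D0 k → D0 k → D0 k
  | ball {k : ℕ} (i : Fin k) : D0 (k + 1) → D0 k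
  | bex {k : ℕ} (i : Fin k) : D0 (k + 1) → D0 k

/-- Satisfaction of Δ₀ formulas in the universe of ZF-sets. -/
def D0.Sat : ∀ {k : ℕ}, D0 k → (Fin k → ZFSet) → Prop
  | _, .mem i j, v => v i ∈ v j
  | _, .eq i j, v => v i = v j
  | _, .not φ, v => ¬ φ.Sat v
  | _, .and φ ψ, v => φ.Sat v ∧ ψ.Sat v
  | _, .or φ ψ, v => φ.Sat v ∨ ψ.Sat v
  | _, .ball i φ, v => ∀ z ∈ v i, φ.Sat (Fin.cons z v)
  | _, .bex i φ, v => ∃ z ∈ v i, φ.Sat (Fin.cons z v)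

/-- A `k`-ary relation on sets is Δ₀ iff it is defined by some Δ₀ formula. -/
def IsDelta0 {k : ℕ} (R : (Fin k → ZFSet) → Prop) : Prop :=
  ∃ φ : D0 k, ∀ v, R v ↔ φ.Sat v

/-! ## The classes PCSF⁻ and PCSF -/

/-- The class `PCSF⁻` of predicatively computable set functions taking only
safe arguments: generated from projections, pairing, null, union and the
membership conditional, by composition and safe separation. -/
inductive PCSFminus : ∀ m : ℕ, ((Fin m → ZFSet) → ZFSet) → Prop
  | proj {m : ℕ} (j : Fin m) : PCSFminus m fun a => a j
  | pair : PCSFminus 2 fun a => {a 0, a 1}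
  | null : PCSFminus 0 fun _ => ∅
  | union : PCSFminus 1 fun a => ZFSet.sUnion (a 0)
  | cond : PCSFminus 4 fun a => if a 2 ∈ a 3 then a 0 else a 1
  | comp {m k : ℕ} (h : (Fin k → ZFSet) → ZFSet) (t : Fin k → (Fin m → ZFSet) → ZFSet) :
      PCSFminus k h → (∀ i, PCSFminus m (t i)) →
      PCSFminus m fun a => h fun i => t i a
  | sep {m : ℕ} (h : (Fin (m + 1) → ZFSet) → ZFSet) :
      PCSFminus (m + 1) h →
      PCSFminus (m + 1) fun a =>
        ZFSet.sep (fun b => h (Fin.snoc (Fin.init a) b) ≠ ∅) (a (Fin.last m))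

/-- The class `PCSF` of predicatively computable set functions, with `n` normal
and `m` safe arguments: generated from `PCSF⁻` (whose arguments are all safe)
and projections by safe composition and predicative set recursion.  The
recursion rule is stated via its defining equation (which determines the
function uniquely, by ∈-induction); the recursion argument `x` is the first
normal argument, and the set `{f(z,ȳ/ā) : z ∈ x}` of previous values is passed
to `h` as a last, safe, argument. -/
inductive PCSF : ∀ n m : ℕ, ((Fin n → ZFSet) → (Fin m → ZFSet) → ZFSet) → Prop
  | ofMinus {m : ℕ} (h : (Fin m → ZFSet) → ZFSet) :
      PCSFminus m h → PCSF 0 m fun _ a => h a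
  | proj {n m : ℕ} (j : Fin (n + m)) : PCSF n m fun x a => Fin.append x a j
  | comp {n m k l : ℕ} (h : (Fin k → ZFSet) → (Fin l → ZFSet) → ZFSet)
      (r : Fin k → (Fin n → ZFSet) → (Fin 0 → ZFSet) → ZFSet)
      (t : Fin l → (Fin n → ZFSet) → (Fin m → ZFSet) → ZFSet) :
      PCSF k l h → (∀ i, PCSF n 0 (r i)) → (∀ i, PCSF n m (t i)) →
      PCSF n m fun x a => h (fun i => r i x Fin.elim0) fun i => t i x a
  | recur {n m : ℕ} (h : (Fin (n + 1) → ZFSet) → (Fin (m + 1) → ZFSet) → ZFSet)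
      (f : (Fin (n + 1) → ZFSet) → (Fin m → ZFSet) → ZFSet) :
      PCSF (n + 1) (m + 1) h →
      (∀ (x : ZFSet) (y : Fin n → ZFSet) (a : Fin m → ZFSet),
        f (Fin.cons x y) a =
          h (Fin.cons x y) (Fin.snoc a (zImage (fun z => f (Fin.cons z y) a) x))) →
      PCSF (n + 1) m f

/-- A relation is in `PCSF` iff its characteristic function
(`1 = {∅}` for true, `0 = ∅` for false) is in `PCSF`. -/
def PCSFRel (n m : ℕ) (R : (Fin n → ZFSet) → (Fin m → ZFSet) → Prop) : Prop :=
  PCSF n m fun x a => if R x a then ({∅} : ZFSet) else ∅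

/-! ## Transitive closure, hereditary finiteness -/

/-- Transitive closure `TC(x) = x ∪ ⋃{TC(y) : y ∈ x}` by ∈-recursion. -/
noncomputable def TCset : ZFSet → ZFSet :=
  ZFSet.mem_wf.fix fun x ih =>
    x ∪ ZFSet.sUnion (zImage (fun y => if h : y ∈ x then ih y h else ∅) x)

/-- A set is hereditarily finite iff its transitive closure is finite. -/
def IsHF (x : ZFSet) : Prop := (TCset x).toSet.Finite

/-- `cT x` = cardinality of the transitive closure of `x`
(junk value `0` if infinite). -/
noncomputable def cT (x : ZFSet) : ℕ := (TCset x).toSet.ncard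

/-- The finite union `A₁ ∪ ⋯ ∪ Aₘ`. -/
def unionFin {m : ℕ} (A : Fin m → ZFSet) : ZFSet :=
  (List.ofFn A).foldr (· ∪ ·) ∅

/-! ## The encoding ν of binary strings, application, product -/

/-- The von Neumann numeral 1 = {∅}. -/
def zOne : ZFSet := {∅}

/-- The von Neumann numeral 2 = {∅,{∅}}. -/
def zTwo : ZFSet := {∅, {∅}}

/-- The encoding of binary strings (head of the list = last appended bit):
`ν(ε) = ∅` and `ν(s i) = ⟨i+1, ν s⟩`, a bit `i ∈ {0,1}` being represented
by the boolean `i = 1`. -/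
def nu : List Bool → ZFSet
  | [] => ∅
  | b :: s => kpair (if b then zTwo else zOne) (nu s)

/-- `zApp b c = b'c = ⋃{d ∈ ⋃⋃b : ⟨c,d⟩ ∈ b}` (which is `⋃{d : ⟨c,d⟩ ∈ b}`,
since every such `d` belongs to `⋃⋃b`). -/
def zApp (b c : ZFSet) : ZFSet :=
  ZFSet.sUnion (ZFSet.sep (fun d => kpair c d ∈ b) (ZFSet.sUnion (ZFSet.sUnion b)))

/-- Cartesian product `a × b = {⟨u,v⟩ : u ∈ a, v ∈ b}` (with Kuratowski pairs). -/
noncomputable def zProd (a b : ZFSet) : ZFSet :=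
  ZFSet.sUnion (zImage (fun u => zImage (fun v => kpair u v) b) a)

/-! ## Polynomial time computability on binary strings -/

/-- The trivial encoding of binary strings over the alphabet `Bool`. -/
def boolListEncoding : Computability.Encoding (List Bool) Bool where
  encode := id
  decode := fun l => some l
  decode_encode := fun _ => rfl

/-- Encoding of a tuple of binary strings over the alphabet `Option Bool`:
the strings are listed in order, each terminated by the separator `none`. -/
def encTuple : (k : ℕ) → (Fin k → List Bool) → List (Option Bool)
  | 0, _ => []
  | k + 1, v => (v 0).map some ++ none :: encTuple k (Fin.tail v)

/-- Splits off the first separator-terminated block. -/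
def splitFirst : List (Option Bool) → List Bool × List (Option Bool)
  | [] => ([], [])
  | none :: l => ([], l)
  | some b :: l => ((splitFirst l).1.cons b, (splitFirst l).2)

theorem splitFirst_encode (s : List Bool) (rest : List (Option Bool)) :
    splitFirst (s.map some ++ none :: rest) = (s, rest) := by
  induction s with
  | nil => rfl
  | cons b s ih => simp [splitFirst, ih]

/-- Decoding of tuples of binary strings. -/
def decTuple : (k : ℕ) → List (Option Bool) → Option (Fin k → List Bool)
  | 0, _ => some Fin.elim0
  | k + 1, l =>
    (decTuple k (splitFirst l).2).map fun v => Fin.cons (splitFirst l).1 v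

theorem decTuple_encTuple : ∀ (k : ℕ) (v : Fin k → List Bool),
    decTuple k (encTuple k v) = some v := by
  intro k
  induction k with
  | zero =>
    intro v
    simp only [decTuple]
    congr
    exact funext fun i => i.elim0
  | succ k ih =>
    intro v
    simp [decTuple, encTuple, splitFirst_encode, ih (Fin.tail v), Fin.cons_self_tail]

/-- The standard encoding of tuples of binary strings. -/
def tupleEncoding (k : ℕ) : Computability.Encoding (Fin k → List Bool) (Option Bool) where
  encode := encTuple k
  decode := decTuple k
  decode_encode := decTuple_encTuple k

/-- A function on tuples of binary strings is polynomial time computable iff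
some two-stack machine computes it in polynomial time (Mathlib's notion). -/
def PolyTimeStringFun {k : ℕ} (f : (Fin k → List Bool) → List Bool) : Prop :=
  Nonempty (Turing.TM2ComputableInPolyTime (tupleEncoding k).encode boolListEncoding.encode f)

/-- Polynomial time computability for functions on ℕ,
with respect to the standard binary encoding of naturals. -/
def PolyTimeNatFun (f : ℕ → ℕ) : Prop :=
  Nonempty (Turing.TM2ComputableInPolyTime Computability.encodingNatBool.encode
    Computability.encodingNatBool.encode f)

/-! ## A feasible encoding of lists of naturals by naturals -/

/-- Reads a list of bits (least significant first) as a natural number. -/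
def bitsToNat (l : List Bool) : ℕ := l.foldr (fun b n => Nat.bit b n) 0

/-- A standard feasible (linear size) encoding of lists of natural numbers:
every bit of the binary expansion of an entry is escaped as `[false, b]`,
entries are terminated by `[true, true]`, and a final `true` protects
leading zeros. -/
def encodeNatList (l : List ℕ) : ℕ :=
  bitsToNat
    ((l.map fun n => (Nat.bits n).foldr (fun b acc => false :: b :: acc) [true, true]).foldr
        (· ++ ·) [true])

/-! ## Rooted DAGs encoding hereditarily finite sets -/

/-- A rooted DAG: a finite set `V` of natural numbers, edges `E ⊆ V × V`
going strictly downwards, and a root `r ∈ V` which is the only node of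
indegree zero. -/
structure RootedDag where
  V : Finset ℕ
  E : Finset (ℕ × ℕ)
  r : ℕ
  edge_mem : ∀ e ∈ E, e.1 ∈ V ∧ e.2 ∈ V
  root_mem : r ∈ V
  root_indeg : ∀ e ∈ E, e.2 ≠ r
  reach_nonroot : ∀ a ∈ V, a ≠ r → ∃ b ∈ V, (b, a) ∈ E
  desc : ∀ e ∈ E, e.2 < e.1

namespace RootedDag

/-- The children of a node. -/
def children (G : RootedDag) (a : ℕ) : Finset ℕ :=
  (G.E.filter fun e => e.1 = a).image Prod.snd

theorem children_lt (G : RootedDag) {a b : ℕ} (h : b ∈ G.children a) : b < a := by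
  simp only [children, Finset.mem_image, Finset.mem_filter] at h
  obtain ⟨e, ⟨heE, he1⟩, he2⟩ := h
  have := G.desc e heE
  omega

/-- The hereditarily finite set encoded at a node:
`set_G(a) = {set_G(b) : (a,b) ∈ E}`. -/
def setAt (G : RootedDag) (a : ℕ) : ZFSet.{0} :=
  (((G.children a).attach.toList).map fun b => G.setAt b.1).foldr insert ∅
termination_by a
decreasing_by exact G.children_lt b.2

/-- The hereditarily finite set encoded by a rooted DAG. -/
def set (G : RootedDag) : ZFSet.{0} := G.setAt G.r

/-- A DAG is fully collapsed iff distinct nodes encode distinct sets. -/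
def FullyCollapsed (G : RootedDag) : Prop :=
  ∀ a ∈ G.V, ∀ b ∈ G.V, G.setAt a = G.setAt b → a = b

/-- Reachability along edges. -/
def Reaches (G : RootedDag) (a b : ℕ) : Prop :=
  Relation.ReflTransGen (fun u v => (u, v) ∈ G.E) a b

/-- The node set of the sub-DAG `G|a` of nodes reachable from `a`. -/
noncomputable def reachSet (G : RootedDag) (a : ℕ) : Finset ℕ :=
  G.V.filter fun b => G.Reaches a b

/-- A DAG is balanced iff each node `a` is at most the number of nodes of `G|a`. -/
def Balanced (G : RootedDag) : Prop :=
  ∀ a ∈ G.V, a ≤ (G.reachSet a).card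

end RootedDag

/-- The numeric code `⌈G⌉` of a rooted DAG: the code of the triple consisting
of (the code of) the sorted list of vertices, (the code of) the sorted list of
pair-coded edges, and the root. -/
noncomputable def RootedDag.code (G : RootedDag) : ℕ :=
  encodeNatList [encodeNatList (G.V.sort (· ≤ ·)),
    encodeNatList ((G.E.image fun e => Nat.pair e.1 e.2).sort (· ≤ ·)), G.r]

/-- The finite set `{l₀, …, l_{n-1}}` as a ZF-set. -/
def zSetOfList (l : List ZFSet) : ZFSet := l.foldr insert ∅

/-- The set difference `diff(−/a,b) = a \ b` is in `PCSF⁻`. -/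
theorem diff_mem_PCSFminus : PCSFminus 2 fun a => a 0 \ a 1 := by
  -- constant ∅ in 2 safe arguments
  have h0 : PCSFminus 2 (fun _ : Fin 2 → ZFSet => (∅ : ZFSet)) :=
    PCSFminus.comp _ Fin.elim0 PCSFminus.null (fun i => i.elim0)
  -- constant {∅} in 2 safe arguments
  have h1 : PCSFminus 2 (fun _ : Fin 2 → ZFSet => ({∅} : ZFSet)) := by
    have h := PCSFminus.comp (m := 2) _ (fun _ : Fin 2 => fun _ : Fin 2 → ZFSet => (∅ : ZFSet))
      PCSFminus.pair (fun _ => h0)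
    have e : (fun _ : Fin 2 → ZFSet =>
        (fun a : Fin 2 → ZFSet => ({a 0, a 1} : ZFSet)) fun _ => (∅ : ZFSet)) =
        fun _ : Fin 2 → ZFSet => ({∅} : ZFSet) := by
      funext a
      ext z
      simp
    rwa [e] at h
  -- h2 a = if a 1 ∈ a 0 then ∅ else {∅}
  have h2 : PCSFminus 2 (fun a : Fin 2 → ZFSet => if a 1 ∈ a 0 then (∅ : ZFSet) else {∅}) := by
    have h := PCSFminus.comp (m := 2) _
      (![fun _ => (∅ : ZFSet), fun _ => ({∅} : ZFSet), fun a => a 1, fun a => a 0])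
      PCSFminus.cond (fun i => by
        fin_cases i
        · exact h0
        · exact h1
        · exact PCSFminus.proj 1
        · exact PCSFminus.proj 0)
    convert h using 2
    rfl
  -- separation: fun a => {b ∈ a 1 : b ∉ a 0}
  have h3 := PCSFminus.sep (m := 1) _ h2
  -- swap the arguments
  have h4 := PCSFminus.comp (m := 2) _ (![fun a => a 1, fun a => a 0]) h3
    (fun i => by fin_cases i <;> exact PCSFminus.proj _)
  convert h4 using 1
  funext a
  ext z
  rw [ZFSet.mem_sdiff]
  constructor
  · rintro ⟨hz, hnz⟩
    refine ZFSet.mem_sep.mpr ⟨hz, ?_⟩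
    show (if z ∈ a 1 then (∅ : ZFSet) else {∅}) ≠ ∅
    rw [if_neg hnz]
    intro h
    have hm : (∅ : ZFSet) ∈ ({∅} : ZFSet) := ZFSet.mem_singleton.mpr rfl
    rw [h] at hm
    exact ZFSet.notMem_empty ∅ hm
  · intro hmem
    obtain ⟨hz, hne⟩ := ZFSet.mem_sep.mp hmem
    have hne' : (if z ∈ a 1 then (∅ : ZFSet) else {∅}) ≠ ∅ := hne
    exact ⟨hz, fun h => hne' (if_pos h)⟩

end PCSFPaper
end
end

section
/- If g(x̄/ā,b̄) is in PCSF, then the function f defined by f(x̄,ȳ/b̄) = g(x̄/ȳ,b̄) (i.e., moving some safe arguments of g into normal argument positions) is also in PCSF. -/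
open scoped Classical

noncomputable section

namespace PCSFPaper

/-- If `g(x̄/ā,b̄) ∈ PCSF` then so is
`f(x̄,ȳ/b̄) = g(x̄/ȳ,b̄)`, obtained by moving safe arguments of `g`
into normal positions. -/
theorem pcsf_safe_to_normal {n k m : ℕ}
    (g : (Fin n → ZFSet) → (Fin (k + m) → ZFSet) → ZFSet)
    (hg : PCSF n (k + m) g) :
    PCSF (n + k) m fun x b =>
      g (fun i => x (Fin.castAdd k i)) (Fin.append (fun j => x (Fin.natAdd n j)) b) := by
  set tIdx : Fin (k + m) → Fin ((n + k) + m) :=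
    Fin.addCases (fun il => Fin.castAdd m (Fin.natAdd n il))
      (fun ir => Fin.natAdd (n + k) ir) with htIdx
  have h := PCSF.comp g
    (fun i x (a : Fin 0 → ZFSet) => Fin.append x a (Fin.castAdd 0 (Fin.castAdd k i)))
    (fun i x (a : Fin m → ZFSet) => Fin.append x a (tIdx i))
    hg (fun i => PCSF.proj _) (fun i => PCSF.proj _)
  have key : (fun (x : Fin (n + k) → ZFSet) (b : Fin m → ZFSet) =>
      g (fun i => x (Fin.castAdd k i)) (Fin.append (fun j => x (Fin.natAdd n j)) b)) =
      fun x b => g (fun i => Fin.append x Fin.elim0 (Fin.castAdd 0 (Fin.castAdd k i)))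
        (fun i => Fin.append x b (tIdx i)) := by
    funext x b
    congr 1
    · funext i
      rw [Fin.append_left]
    · funext i
      refine Fin.addCases (fun il => ?_) (fun ir => ?_) i
      · simp only [htIdx, Fin.addCases_left, Fin.append_left]
      · simp only [htIdx, Fin.addCases_right, Fin.append_right]
  rw [key]
  exact h

end PCSFPaper
end
end

section
/- The application function f(- /b,c) = b'c = ⋃{d ∈ ⋃⋃b : ⟨c,d⟩ ∈ b} is in PCSF⁻, where ⟨c,d⟩ = {{c},{c,d}} is the Kuratowski ordered pair. (Thus b'c is the unique d with ⟨c,d⟩ ∈ b when such a d exists.) -/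
open scoped Classical

noncomputable section

namespace PCSFPaper

private theorem pcsf_eq {m : ℕ} {f g : (Fin m → ZFSet) → ZFSet}
    (h : PCSFminus m f) (e : ∀ a, f a = g a) : PCSFminus m g := by
  have : f = g := funext e
  exact this ▸ h

private theorem pcsf_empty (m : ℕ) : PCSFminus m fun _ => (∅ : ZFSet) :=
  PCSFminus.comp (fun _ => ∅) Fin.elim0 PCSFminus.null (fun i => i.elim0)

private theorem pcsf_one (m : ℕ) : PCSFminus m fun _ => ({∅} : ZFSet) := by
  refine pcsf_eq (PCSFminus.comp (fun a => {a 0, a 1})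
    ![fun _ => ∅, fun _ => ∅] PCSFminus.pair ?_) ?_
  · intro i; fin_cases i <;> exact pcsf_empty m
  · intro a
    simp only [Matrix.cons_val_zero, Matrix.cons_val_one, Matrix.head_cons]
    ext x; simp

private theorem pcsf_kpair :
    PCSFminus 3 fun a => kpair (a 1) (a 2) := by
  have h1 : PCSFminus 3 fun a => ({a 1, a 1} : ZFSet) := by
    refine pcsf_eq (PCSFminus.comp (fun a => {a 0, a 1})
      ![fun a => a 1, fun a => a 1] PCSFminus.pair ?_) ?_
    · intro i; fin_cases i <;> exact PCSFminus.proj 1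
    · intro a; simp
  have h2 : PCSFminus 3 fun a => ({a 1, a 2} : ZFSet) := by
    refine pcsf_eq (PCSFminus.comp (fun a => {a 0, a 1})
      ![fun a => a 1, fun a => a 2] PCSFminus.pair ?_) ?_
    · intro i; fin_cases i
      · exact PCSFminus.proj 1
      · exact PCSFminus.proj 2
    · intro a; simp
  refine pcsf_eq (PCSFminus.comp (fun a => {a 0, a 1})
    ![fun a => {a 1, a 1}, fun a => {a 1, a 2}] PCSFminus.pair ?_) ?_
  · intro i; fin_cases i
    · exact h1
    · exact h2
  · intro a
    simp only [Matrix.cons_val_zero, Matrix.cons_val_one, Matrix.head_cons, kpair]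
    congr 1
    ext x; simp

private theorem pcsf_chi :
    PCSFminus 3 fun a => if kpair (a 1) (a 2) ∈ a 0 then ({∅} : ZFSet) else ∅ := by
  refine pcsf_eq (PCSFminus.comp (fun a => if a 2 ∈ a 3 then a 0 else a 1)
    ![fun _ => {∅}, fun _ => ∅, fun a => kpair (a 1) (a 2), fun a => a 0]
    PCSFminus.cond ?_) ?_
  · intro i; fin_cases i
    · exact pcsf_one 3
    · exact pcsf_empty 3
    · exact pcsf_kpair
    · exact PCSFminus.proj 0
  · intro a; simp

private theorem ite_one_ne_empty (P : Prop) [Decidable P] :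
    ((if P then ({∅} : ZFSet) else ∅) ≠ ∅) ↔ P := by
  split_ifs with h
  · simp only [iff_true_intro h, iff_true]
    intro he
    have : (∅ : ZFSet) ∈ ({∅} : ZFSet) := ZFSet.mem_singleton.2 rfl
    rw [he] at this
    exact ZFSet.notMem_empty _ this
  · simp [h]

/-- The application function
`f(−/b,c) = b'c = ⋃{d ∈ ⋃⋃b : ⟨c,d⟩ ∈ b}` is in `PCSF⁻`. -/
theorem app_mem_PCSFminus : PCSFminus 2 fun a => zApp (a 0) (a 1) := by
  have hsep : PCSFminus 3 fun a =>
      ZFSet.sep (fun d => kpair (a 1) d ∈ a 0) (a 2) := by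
    refine pcsf_eq (PCSFminus.sep _ pcsf_chi) ?_
    intro a
    have hl : a (Fin.last 2) = a 2 := rfl
    rw [hl]
    congr 1
    funext d
    have h0 : Fin.snoc (Fin.init a) d 0 = a 0 := by
      simp [Fin.snoc, Fin.init]
    have h1 : Fin.snoc (Fin.init a) d 1 = a 1 := by
      simp [Fin.snoc, Fin.init]
    have h2 : Fin.snoc (Fin.init a) d 2 = d := by
      simp [Fin.snoc]
    rw [h0, h1, h2]
    exact propext (ite_one_ne_empty _)
  have huu : PCSFminus 2 fun a => ZFSet.sUnion (ZFSet.sUnion (a 0)) := by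
    have hu1 : PCSFminus 2 fun a => ZFSet.sUnion (a 0) :=
      PCSFminus.comp (fun a => ZFSet.sUnion (a 0)) ![fun a => a 0]
        PCSFminus.union (fun i => by fin_cases i; exact PCSFminus.proj 0)
    exact PCSFminus.comp (fun a => ZFSet.sUnion (a 0)) ![fun a => ZFSet.sUnion (a 0)]
      PCSFminus.union (fun i => by fin_cases i; exact hu1)
  have hbig : PCSFminus 2 fun a =>
      ZFSet.sep (fun d => kpair (a 1) d ∈ a 0) (ZFSet.sUnion (ZFSet.sUnion (a 0))) := by
    refine pcsf_eq (PCSFminus.comp _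
      ![fun a => a 0, fun a => a 1, fun a => ZFSet.sUnion (ZFSet.sUnion (a 0))]
      hsep ?_) ?_
    · intro i; fin_cases i
      · exact PCSFminus.proj 0
      · exact PCSFminus.proj 1
      · exact huu
    · intro a; simp
  refine pcsf_eq (PCSFminus.comp (fun a => ZFSet.sUnion (a 0))
    ![fun a => ZFSet.sep (fun d => kpair (a 1) d ∈ a 0)
        (ZFSet.sUnion (ZFSet.sUnion (a 0)))]
    PCSFminus.union (fun i => by fin_cases i; exact hbig)) ?_
  intro a
  rfl

end PCSFPaper
end
end

section
/- If h is in PCSF, then so is the function f defined by the recursion f(x,ȳ/ā) = h(x,ȳ/ā, ⋃{f(z,ȳ/ā) : z∈x}), in which the recursion value substituted in the safe position is the union of the values at the elements of x. -/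
open scoped Classical

noncomputable section

namespace PCSFPaper

/-- `PCSF` is closed under the recursion scheme
`f(x,ȳ/ā) = h(x,ȳ/ā, ⋃{f(z,ȳ/ā) : z ∈ x})`, where the recursion value
passed in the safe position is the *union* of the previous values. -/
theorem pcsf_union_recursion {n m : ℕ}
    (h : (Fin (n + 1) → ZFSet) → (Fin (m + 1) → ZFSet) → ZFSet)
    (f : (Fin (n + 1) → ZFSet) → (Fin m → ZFSet) → ZFSet)
    (hh : PCSF (n + 1) (m + 1) h)
    (hf : ∀ (x : ZFSet) (y : Fin n → ZFSet) (a : Fin m → ZFSet),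
      f (Fin.cons x y) a =
        h (Fin.cons x y)
          (Fin.snoc a (ZFSet.sUnion (zImage (fun z => f (Fin.cons z y) a) x)))) :
    PCSF (n + 1) m f := by
  classical
  set h' : (Fin (n+1) → ZFSet) → (Fin (m+1) → ZFSet) → ZFSet :=
    fun x a => h x (Fin.snoc (Fin.init a) (ZFSet.sUnion (a (Fin.last m)))) with hh'def
  have hU : PCSF (n+1) (m+1) fun x a => ZFSet.sUnion (a (Fin.last m)) := by
    have h0 : PCSF 0 1 fun _ a => ZFSet.sUnion (a 0) := PCSF.ofMinus _ PCSFminus.union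
    have hp : PCSF (n+1) (m+1) fun x a => Fin.append x a (Fin.natAdd (n+1) (Fin.last m)) :=
      PCSF.proj _
    have hc := PCSF.comp (n := n+1) (m := m+1)
      (fun _ a => ZFSet.sUnion (a 0)) (fun i => i.elim0)
      (fun _ x a => Fin.append x a (Fin.natAdd (n+1) (Fin.last m)))
      h0 (fun i => i.elim0) (fun _ => hp)
    convert hc using 1
    funext x a
    simp only [Fin.append_right]
  let t : Fin (m+1) → (Fin (n+1) → ZFSet) → (Fin (m+1) → ZFSet) → ZFSet :=
    Fin.snoc (fun (i : Fin m) x a => a i.castSucc)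
      (fun x a => ZFSet.sUnion (a (Fin.last m)))
  have ht : ∀ i : Fin (m+1), PCSF (n+1) (m+1)
      (t i) := by
    intro i
    refine Fin.lastCases ?_ ?_ i
    · simpa [t] using hU
    · intro j
      have hp := PCSF.proj (n := n+1) (m := m+1) (Fin.natAdd (n+1) j.castSucc)
      simp only [t, Fin.snoc_castSucc]
      convert hp using 1
      funext x a
      simp only [Fin.append_right]
  have hr : ∀ i : Fin (n+1), PCSF (n+1) 0 (fun x (_ : Fin 0 → ZFSet) => x i) := by
    intro i
    have hp := PCSF.proj (n := n+1) (m := 0) (Fin.castAdd 0 i)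
    convert hp using 1
    funext x a
    simp only [Fin.append_left]
  have hh' : PCSF (n+1) (m+1) h' := by
    have hc := PCSF.comp h (fun i x _ => x i) t hh hr ht
    convert hc using 1
    funext x a
    show h x (Fin.snoc (Fin.init a) (ZFSet.sUnion (a (Fin.last m)))) = _
    congr 1
    funext i
    refine Fin.lastCases ?_ ?_ i
    · simp [t]
    · intro j; simp [t, Fin.init]
  refine PCSF.recur h' f hh' ?_
  intro x y a
  rw [hf]
  simp [hh'def]

end PCSFPaper
end
end

section
/- If h is in PCSF, then the bounded union function f(x,ȳ/ā) = ⋃{h(z,ȳ/ā) : z∈x}, where the union ranges over elements z of the normal argument x, is in PCSF. -/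
open scoped Classical

noncomputable section

namespace PCSFPaper

/-! ### Auxiliary material for Statement 8 -/

section BoundedUnionAux

private lemma pmEq {m : ℕ} {f g : (Fin m → ZFSet) → ZFSet}
    (hf : PCSFminus m f) (e : ∀ a, f a = g a) : PCSFminus m g :=
  (funext e : f = g) ▸ hf

private lemma pcsfEq {n m : ℕ} {f g : (Fin n → ZFSet) → (Fin m → ZFSet) → ZFSet}
    (hf : PCSF n m f) (e : ∀ x a, f x a = g x a) : PCSF n m g :=
  (funext fun x => funext (e x) : f = g) ▸ hf

private lemma pm_null {m : ℕ} : PCSFminus m (fun _ => (∅ : ZFSet)) :=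
  PCSFminus.comp _ (fun i => i.elim0) PCSFminus.null (fun i => i.elim0)

private lemma pm_pairF {m : ℕ} {f g : (Fin m → ZFSet) → ZFSet}
    (hf : PCSFminus m f) (hg : PCSFminus m g) :
    PCSFminus m (fun a => ({f a, g a} : ZFSet)) := by
  have hc := PCSFminus.comp _ ![f, g] PCSFminus.pair
    (fun i => by fin_cases i <;> assumption)
  exact pmEq hc fun a => by simp

private lemma pm_unionF {m : ℕ} {f : (Fin m → ZFSet) → ZFSet}
    (hf : PCSFminus m f) :
    PCSFminus m (fun a => ZFSet.sUnion (f a)) := by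
  have hc := PCSFminus.comp _ ![f] PCSFminus.union
    (fun i => by fin_cases i; assumption)
  exact pmEq hc fun a => by simp

private lemma pm_condF {m : ℕ} {f g c d : (Fin m → ZFSet) → ZFSet}
    (hf : PCSFminus m f) (hg : PCSFminus m g)
    (hc : PCSFminus m c) (hd : PCSFminus m d) :
    PCSFminus m (fun a => if c a ∈ d a then f a else g a) := by
  have hcc := PCSFminus.comp _ ![f, g, c, d] PCSFminus.cond
    (fun i => by fin_cases i <;> assumption)
  exact pmEq hcc fun a => by simp

private lemma pm_singletonF {m : ℕ} {f : (Fin m → ZFSet) → ZFSet}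
    (hf : PCSFminus m f) :
    PCSFminus m (fun a => ({f a} : ZFSet)) := by
  refine pmEq (pm_pairF hf hf) fun a => ?_
  refine ZFSet.ext fun z => ?_
  simp [ZFSet.mem_insert_iff]

private lemma pm_oneF {m : ℕ} : PCSFminus m (fun _ => ({∅} : ZFSet)) :=
  pm_singletonF pm_null

private lemma pm_kpairF {m : ℕ} {f g : (Fin m → ZFSet) → ZFSet}
    (hf : PCSFminus m f) (hg : PCSFminus m g) :
    PCSFminus m (fun a => kpair (f a) (g a)) :=
  pmEq (pm_pairF (pm_singletonF hf) (pm_pairF hf hg)) fun _ => rfl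

private lemma pm_comp1 {m : ℕ} {g : (Fin 1 → ZFSet) → ZFSet}
    {f : (Fin m → ZFSet) → ZFSet}
    (hg : PCSFminus 1 g) (hf : PCSFminus m f) :
    PCSFminus m (fun a => g (fun _ => f a)) :=
  pmEq (PCSFminus.comp g (fun _ => f) hg (fun _ => hf)) fun _ => rfl

private lemma pm_comp2 {m : ℕ} {g : (Fin 2 → ZFSet) → ZFSet}
    {f₁ f₂ : (Fin m → ZFSet) → ZFSet}
    (hg : PCSFminus 2 g) (h₁ : PCSFminus m f₁) (h₂ : PCSFminus m f₂) :
    PCSFminus m (fun a => g ![f₁ a, f₂ a]) := by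
  have hc := PCSFminus.comp g ![f₁, f₂] hg (fun i => by fin_cases i <;> assumption)
  refine pmEq hc fun a => ?_
  congr 1
  funext i
  fin_cases i <;> simp

private lemma pm_sep2 {hc : (Fin 2 → ZFSet) → ZFSet} (hhc : PCSFminus 2 hc) :
    PCSFminus 2 (fun a => ZFSet.sep (fun b => hc ![a 0, b] ≠ ∅) (a 1)) := by
  have hs := PCSFminus.sep (m := 1) hc hhc
  refine pmEq hs fun a => ?_
  have e : ∀ b : ZFSet, (Fin.snoc (Fin.init a) b : Fin 2 → ZFSet) = ![a 0, b] := by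
    intro b
    funext i
    fin_cases i
    · show Fin.snoc (Fin.init a) b (Fin.castSucc 0) = _
      rw [Fin.snoc_castSucc]
      rfl
    · show Fin.snoc (Fin.init a) b (Fin.last 1) = _
      rw [Fin.snoc_last]
      rfl
  have e2 : a (Fin.last 1) = a 1 := rfl
  rw [e2]
  congr 1
  funext b
  rw [e b]

private lemma singleton_empty_ne : ({∅} : ZFSet) ≠ ∅ := by
  intro hE
  have h0 : (∅ : ZFSet) ∈ ({∅} : ZFSet) := ZFSet.mem_singleton.2 rfl
  rw [hE] at h0
  exact ZFSet.notMem_empty _ h0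

private lemma ite_one_ne {P : Prop} [Decidable P] :
    ((if P then ({∅} : ZFSet) else ∅) ≠ ∅) ↔ P := by
  by_cases hP : P <;> simp [hP, singleton_empty_ne]

private lemma zOne_ne_empty : zOne ≠ ∅ := singleton_empty_ne

/-- Condition: `⟨∅,{b}⟩ ∈ q`. -/
private noncomputable def condA (v : Fin 2 → ZFSet) : ZFSet :=
  if kpair ∅ ({v 1} : ZFSet) ∈ v 0 then ({∅} : ZFSet) else ∅

/-- Condition: `⟨1,b⟩ ∈ q`. -/
private noncomputable def condB (v : Fin 2 → ZFSet) : ZFSet :=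
  if kpair zOne (v 1) ∈ v 0 then ({∅} : ZFSet) else ∅

private lemma pm_condA : PCSFminus 2 condA :=
  pm_condF pm_oneF pm_null
    (pm_kpairF pm_null (pm_singletonF (PCSFminus.proj 1))) (PCSFminus.proj 0)

private lemma pm_condB : PCSFminus 2 condB :=
  pm_condF pm_oneF pm_null
    (pm_kpairF pm_oneF (PCSFminus.proj 1)) (PCSFminus.proj 0)

/-- Extract `⋃{c : ⟨∅,{c}⟩ ∈ ⋃q}` from `q`. -/
private noncomputable def extractU (q : ZFSet) : ZFSet :=
  ZFSet.sUnion (ZFSet.sep (fun u => kpair ∅ ({u} : ZFSet) ∈ ZFSet.sUnion q)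
    (ZFSet.sUnion (ZFSet.sUnion (ZFSet.sUnion (ZFSet.sUnion q)))))

/-- Extract `⋃{d : ⟨1,d⟩ ∈ q}` from `q`. -/
private noncomputable def extract2 (q : ZFSet) : ZFSet :=
  ZFSet.sUnion (ZFSet.sep (fun d => kpair zOne d ∈ q)
    (ZFSet.sUnion (ZFSet.sUnion q)))

private lemma pm_extractU : PCSFminus 1 (fun a => extractU (a 0)) := by
  have hS := pm_sep2 pm_condA
  have h1 : PCSFminus 1 (fun a : Fin 1 → ZFSet => ZFSet.sUnion (a 0)) :=
    pm_unionF (PCSFminus.proj 0)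
  have h4 : PCSFminus 1 (fun a : Fin 1 → ZFSet =>
      ZFSet.sUnion (ZFSet.sUnion (ZFSet.sUnion (ZFSet.sUnion (a 0))))) :=
    pm_unionF (pm_unionF (pm_unionF (pm_unionF (PCSFminus.proj 0))))
  have hc := pm_unionF (pm_comp2 hS h1 h4)
  refine pmEq hc fun a => ?_
  simp only [Matrix.cons_val_zero, Matrix.cons_val_one, Matrix.head_cons]
  unfold extractU
  congr 1
  refine ZFSet.ext fun z => ?_
  rw [ZFSet.mem_sep, ZFSet.mem_sep]
  refine and_congr_right fun _ => ?_
  simp only [condA, Matrix.cons_val_zero, Matrix.cons_val_one, Matrix.head_cons]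
  exact ite_one_ne

private lemma pm_extract2 : PCSFminus 1 (fun a => extract2 (a 0)) := by
  have hS := pm_sep2 pm_condB
  have h2 : PCSFminus 1 (fun a : Fin 1 → ZFSet =>
      ZFSet.sUnion (ZFSet.sUnion (a 0))) :=
    pm_unionF (pm_unionF (PCSFminus.proj 0))
  have hc := pm_unionF (pm_comp2 hS (PCSFminus.proj 0) h2)
  refine pmEq hc fun a => ?_
  simp only [Matrix.cons_val_zero, Matrix.cons_val_one, Matrix.head_cons]
  unfold extract2
  congr 1
  refine ZFSet.ext fun z => ?_
  rw [ZFSet.mem_sep, ZFSet.mem_sep]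
  refine and_congr_right fun _ => ?_
  simp only [condB, Matrix.cons_val_zero, Matrix.cons_val_one, Matrix.head_cons]
  exact ite_one_ne

/-- The step combinator of the recursion. -/
private noncomputable def Phi (v : Fin 2 → ZFSet) : ZFSet :=
  {kpair ∅ ({v 0} : ZFSet), kpair zOne (extractU (v 1))}

private lemma pm_Phi : PCSFminus 2 Phi := by
  have h1 : PCSFminus 2 (fun v : Fin 2 → ZFSet => kpair ∅ ({v 0} : ZFSet)) :=
    pm_kpairF pm_null (pm_singletonF (PCSFminus.proj 0))
  have hext : PCSFminus 2 (fun v : Fin 2 → ZFSet => extractU (v 1)) :=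
    pmEq (pm_comp1 pm_extractU (PCSFminus.proj 1)) fun v => rfl
  have h2 : PCSFminus 2 (fun v : Fin 2 → ZFSet => kpair zOne (extractU (v 1))) :=
    pmEq (pm_kpairF pm_oneF hext) fun v => rfl
  exact pmEq (pm_pairF h1 h2) fun v => rfl

/- PCSF-level builders -/

private lemma pcsf_normalProj {n m : ℕ} (j : Fin n) :
    PCSF n m (fun x _ => x j) := by
  have hp := PCSF.proj (n := n) (m := m) (Fin.castAdd m j)
  exact pcsfEq hp fun x a => Fin.append_left x a j

private lemma pcsf_safeProj {n m : ℕ} (j : Fin m) :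
    PCSF n m (fun _ a => a j) := by
  have hp := PCSF.proj (n := n) (m := m) (Fin.natAdd n j)
  exact pcsfEq hp fun x a => Fin.append_right x a j

private lemma pcsf_extendSafe {n m : ℕ}
    {h : (Fin n → ZFSet) → (Fin m → ZFSet) → ZFSet} (hh : PCSF n m h) :
    PCSF n (m + 1) (fun x a => h x (Fin.init a)) := by
  have hc := PCSF.comp h (fun j => fun x _ => x j)
      (fun i => fun x a => a (Fin.castSucc i)) hh
      (fun j => pcsf_normalProj j) (fun i => pcsf_safeProj (Fin.castSucc i))
  exact pcsfEq hc fun x a => rfl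

private lemma pcsf_compMinus1 {n m : ℕ} {Φ : (Fin 1 → ZFSet) → ZFSet}
    {F : (Fin n → ZFSet) → (Fin m → ZFSet) → ZFSet}
    (hΦ : PCSFminus 1 Φ) (hF : PCSF n m F) :
    PCSF n m (fun x a => Φ (fun _ => F x a)) := by
  have hc := PCSF.comp (fun _ a => Φ a) (fun i => i.elim0) (fun _ => F)
      (PCSF.ofMinus Φ hΦ) (fun i => i.elim0) (fun _ => hF)
  exact pcsfEq hc fun x a => rfl

private lemma pcsf_compMinus2 {n m : ℕ} {Φ : (Fin 2 → ZFSet) → ZFSet}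
    {F G : (Fin n → ZFSet) → (Fin m → ZFSet) → ZFSet}
    (hΦ : PCSFminus 2 Φ) (hF : PCSF n m F) (hG : PCSF n m G) :
    PCSF n m (fun x a => Φ ![F x a, G x a]) := by
  have hc := PCSF.comp (fun _ a => Φ a) (fun i => i.elim0) ![F, G]
      (PCSF.ofMinus Φ hΦ) (fun i => i.elim0)
      (fun i => by fin_cases i <;> assumption)
  refine pcsfEq hc fun x a => ?_
  show Φ (fun i => ![F, G] i x a) = Φ ![F x a, G x a]
  congr 1
  funext i
  fin_cases i <;> simp

/- Semantic facts about the encoding -/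

private lemma kpair_def (c d : ZFSet) : kpair c d = ZFSet.pair c d := rfl

private lemma mem_zImage {f : ZFSet → ZFSet} {x y : ZFSet} :
    y ∈ zImage f x ↔ ∃ z ∈ x, f z = y :=
  @ZFSet.mem_image f (Classical.allZFSetDefinable fun s => f (s 0)) x y

private lemma mem_kpair {c d s : ZFSet} :
    s ∈ kpair c d ↔ s = ({c} : ZFSet) ∨ s = ({c, d} : ZFSet) := by
  simp [kpair, ZFSet.mem_insert_iff]

private lemma extractU_spec (h' t' : ZFSet → ZFSet) (x : ZFSet) :
    extractU (zImage
        (fun z => ({kpair ∅ ({h' z} : ZFSet), kpair zOne (t' z)} : ZFSet)) x)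
      = ZFSet.sUnion (zImage h' x) := by
  unfold extractU
  congr 1
  refine ZFSet.ext fun u => ?_
  rw [ZFSet.mem_sep, mem_zImage]
  constructor
  · rintro ⟨-, hmem⟩
    rw [ZFSet.mem_sUnion] at hmem
    obtain ⟨s, hs, hus⟩ := hmem
    rw [mem_zImage] at hs
    obtain ⟨z, hz, rfl⟩ := hs
    rw [ZFSet.mem_insert_iff, ZFSet.mem_singleton] at hus
    rcases hus with h1 | h2
    · rw [kpair_def, kpair_def] at h1
      exact ⟨z, hz, (ZFSet.singleton_injective (ZFSet.pair_injective h1).2).symm⟩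
    · rw [kpair_def, kpair_def] at h2
      exact absurd (ZFSet.pair_injective h2).1.symm zOne_ne_empty
  · rintro ⟨z, hz, rfl⟩
    have hGz : ({kpair ∅ ({h' z} : ZFSet), kpair zOne (t' z)} : ZFSet)
        ∈ zImage (fun z => ({kpair ∅ ({h' z} : ZFSet), kpair zOne (t' z)} : ZFSet)) x :=
      mem_zImage.2 ⟨z, hz, rfl⟩
    have hk : kpair ∅ ({h' z} : ZFSet) ∈
        ({kpair ∅ ({h' z} : ZFSet), kpair zOne (t' z)} : ZFSet) :=
      ZFSet.mem_insert_iff.2 (Or.inl rfl)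
    have hk1 : kpair ∅ ({h' z} : ZFSet) ∈ ZFSet.sUnion
        (zImage (fun z => ({kpair ∅ ({h' z} : ZFSet), kpair zOne (t' z)} : ZFSet)) x) :=
      ZFSet.mem_sUnion.2 ⟨_, hGz, hk⟩
    refine ⟨?_, hk1⟩
    -- h' z ∈ ⋃⋃⋃⋃ q
    have m2 : ({∅, ({h' z} : ZFSet)} : ZFSet) ∈ kpair ∅ ({h' z} : ZFSet) :=
      mem_kpair.2 (Or.inr rfl)
    have m3 : ({h' z} : ZFSet) ∈ ({∅, ({h' z} : ZFSet)} : ZFSet) :=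
      ZFSet.mem_insert_iff.2 (Or.inr (ZFSet.mem_singleton.2 rfl))
    have m4 : h' z ∈ ({h' z} : ZFSet) := ZFSet.mem_singleton.2 rfl
    exact ZFSet.mem_sUnion.2 ⟨_, ZFSet.mem_sUnion.2 ⟨_, ZFSet.mem_sUnion.2
      ⟨_, hk1, m2⟩, m3⟩, m4⟩

private lemma extract2_spec (c t : ZFSet) :
    extract2 ({kpair ∅ ({c} : ZFSet), kpair zOne t} : ZFSet) = t := by
  unfold extract2
  have hsep : ZFSet.sep (fun d => kpair zOne d ∈
        ({kpair ∅ ({c} : ZFSet), kpair zOne t} : ZFSet))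
      (ZFSet.sUnion (ZFSet.sUnion ({kpair ∅ ({c} : ZFSet), kpair zOne t} : ZFSet)))
      = ({t} : ZFSet) := by
    have hk : kpair zOne t ∈ ({kpair ∅ ({c} : ZFSet), kpair zOne t} : ZFSet) :=
      ZFSet.mem_insert_iff.2 (Or.inr (ZFSet.mem_singleton.2 rfl))
    have m2 : ({zOne, t} : ZFSet) ∈ kpair zOne t := mem_kpair.2 (Or.inr rfl)
    have m3 : t ∈ ({zOne, t} : ZFSet) :=
      ZFSet.mem_insert_iff.2 (Or.inr (ZFSet.mem_singleton.2 rfl))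
    have hm : t ∈ ZFSet.sUnion (ZFSet.sUnion
        ({kpair ∅ ({c} : ZFSet), kpair zOne t} : ZFSet)) :=
      ZFSet.mem_sUnion.2 ⟨_, ZFSet.mem_sUnion.2 ⟨_, hk, m2⟩, m3⟩
    refine ZFSet.ext fun d => ?_
    rw [ZFSet.mem_sep, ZFSet.mem_singleton]
    constructor
    · rintro ⟨-, hd⟩
      rw [ZFSet.mem_insert_iff, ZFSet.mem_singleton] at hd
      rcases hd with h1 | h2
      · rw [kpair_def, kpair_def] at h1
        exact absurd (ZFSet.pair_injective h1).1 zOne_ne_empty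
      · rw [kpair_def, kpair_def] at h2
        exact (ZFSet.pair_injective h2).2
    · rintro rfl
      exact ⟨hm, hk⟩
  rw [hsep]
  exact ZFSet.sUnion_singleton

/- The auxiliary recursion -/

private noncomputable def tgtU {n m : ℕ}
    (h : (Fin (n + 1) → ZFSet) → (Fin m → ZFSet) → ZFSet)
    (x : Fin (n + 1) → ZFSet) (a : Fin m → ZFSet) : ZFSet :=
  ZFSet.sUnion (zImage (fun z => h (Fin.cons z (Fin.tail x)) a) (x 0))

private noncomputable def gFun {n m : ℕ}
    (h : (Fin (n + 1) → ZFSet) → (Fin m → ZFSet) → ZFSet)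
    (x : Fin (n + 1) → ZFSet) (a : Fin m → ZFSet) : ZFSet :=
  {kpair ∅ ({h x a} : ZFSet), kpair zOne (tgtU h x a)}

private noncomputable def HFun {n m : ℕ}
    (h : (Fin (n + 1) → ZFSet) → (Fin m → ZFSet) → ZFSet)
    (x : Fin (n + 1) → ZFSet) (a : Fin (m + 1) → ZFSet) : ZFSet :=
  Phi ![h x (Fin.init a), a (Fin.last m)]

private lemma gFun_eq {n m : ℕ}
    (h : (Fin (n + 1) → ZFSet) → (Fin m → ZFSet) → ZFSet)
    (x : ZFSet) (y : Fin n → ZFSet) (a : Fin m → ZFSet) :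
    gFun h (Fin.cons x y) a =
      HFun h (Fin.cons x y)
        (Fin.snoc a (zImage (fun z => gFun h (Fin.cons z y) a) x)) := by
  have himg : zImage (fun z => gFun h (Fin.cons z y) a) x =
      zImage (fun z => ({kpair ∅ ({h (Fin.cons z y) a} : ZFSet),
        kpair zOne (ZFSet.sUnion (zImage (fun w => h (Fin.cons w y) a) z))} : ZFSet)) x := rfl
  unfold HFun
  rw [Fin.init_snoc, Fin.snoc_last]
  show gFun h (Fin.cons x y) a =
    ({kpair ∅ ({h (Fin.cons x y) a} : ZFSet),
      kpair zOne (extractU (zImage (fun z => gFun h (Fin.cons z y) a) x))} : ZFSet)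
  rw [himg, extractU_spec (fun z => h (Fin.cons z y) a)
      (fun z => ZFSet.sUnion (zImage (fun w => h (Fin.cons w y) a) z)) x]
  rfl

end BoundedUnionAux

/-- Bounded union over a normal argument: if `h ∈ PCSF` then
`f(x,ȳ/ā) = ⋃{h(z,ȳ/ā) : z ∈ x}` is in `PCSF`. -/
theorem pcsf_bounded_union {n m : ℕ}
    (h : (Fin (n + 1) → ZFSet) → (Fin m → ZFSet) → ZFSet)
    (hh : PCSF (n + 1) m h) :
    PCSF (n + 1) m fun x a =>
      ZFSet.sUnion (zImage (fun z => h (Fin.cons z (Fin.tail x)) a) (x 0)) := by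
  have hH : PCSF (n + 1) (m + 1) (HFun h) :=
    pcsf_compMinus2 pm_Phi (pcsf_extendSafe hh) (pcsf_safeProj (Fin.last m))
  have hg : PCSF (n + 1) m (gFun h) :=
    PCSF.recur (HFun h) (gFun h) hH (gFun_eq h)
  have hfin : PCSF (n + 1) m (fun x a => extract2 (gFun h x a)) := by
    have hc := pcsf_compMinus1 pm_extract2 hg
    exact pcsfEq hc fun x a => rfl
  refine pcsfEq hfin fun x a => ?_
  show extract2 (gFun h x a) = _
  unfold gFun
  rw [extract2_spec]
  rfl

end PCSFPaper
end
end
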